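/- Let a₁ be a bounded sesquilinear form on V × W with inf-sup constant c > 0 and nondegenerate in the second component, let 𝒢 ⊆ X be nonempty and open, let 𝔠 : 𝒢 → S(H × W, 𝕂) and Φ : 𝒢 → W* be maps, and assume that for every m ∈ 𝒢 and every φ ∈ W* there is exactly one u ∈ V with a₁(u,w) + 𝔠(m)(ju,w) = φ(w) for all w ∈ W (strong well-posedness). Let S : 𝒢 → V be the parameter-to-state map, where S(m) is the unique u ∈ V with a₁(u,w) + 𝔠(m)(ju,w) = Φ(m)(w) for all w ∈ W. If Φ and 𝔠 are n-times continuously Fréchet differentiable on 𝒢 for some n ∈ ℕ ∪ {∞}, then S is n-times continuously Fréchet differentiable on 𝒢. -/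

import Mathlib

/-- Theorem 5.1 a): if the data maps `Φ : 𝒢 → W*` and `𝔠 : 𝒢 → S(H×W,𝕂)` are
`n`-times continuously Fréchet differentiable and the variational problem is strongly
well-posed for every `m ∈ 𝒢`, then the parameter-to-state operator `S` is `n`-times
continuously Fréchet differentiable on `𝒢`. -/
theorem parameter_to_state_contDiff
    {𝕂 V W H X : Type*} [RCLike 𝕂]
    [NormedAddCommGroup V] [NormedSpace 𝕂 V] [CompleteSpace V]
    [NormedAddCommGroup W] [NormedSpace 𝕂 W] [CompleteSpace W] [Nontrivial W]
    [NormedAddCommGroup H] [NormedSpace 𝕂 H] [CompleteSpace H]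
    [NormedAddCommGroup X] [NormedSpace 𝕂 X] [CompleteSpace X]
    (hrefl : Function.Surjective ⇑(NormedSpace.inclusionInDoubleDual 𝕂 W))
    (j : V →L[𝕂] H) (hj : Function.Injective ⇑j)
    (a₁ : V →L[𝕂] (W →SL[starRingEnd 𝕂] 𝕂))
    (c : ℝ) (hc : 0 < c)
    (hinfsup : ∀ v : V, c * ‖v‖ ≤ ‖a₁ v‖)
    (hnondeg : ∀ w : W, (∀ v : V, a₁ v w = 0) → w = 0)
    (𝒢 : Set X) (h𝒢open : IsOpen 𝒢) (h𝒢ne : 𝒢.Nonempty)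
    (𝔠 : X → (H →L[𝕂] (W →SL[starRingEnd 𝕂] 𝕂)))
    (Φ : X → (W →SL[starRingEnd 𝕂] 𝕂))
    (hwp : ∀ m ∈ 𝒢, ∀ φ : W →SL[starRingEnd 𝕂] 𝕂,
      ∃! u : V, ∀ w : W, a₁ u w + 𝔠 m (j u) w = φ w)
    (S : X → V)
    (hS : ∀ m ∈ 𝒢, ∀ w : W, a₁ (S m) w + 𝔠 m (j (S m)) w = Φ m w)
    (n : ℕ∞)
    (hΦ : ContDiffOn 𝕂 n Φ 𝒢) (h𝔠 : ContDiffOn 𝕂 n 𝔠 𝒢) :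
    ContDiffOn 𝕂 n S 𝒢 := by
  classical
  let F := W →SL[starRingEnd 𝕂] 𝕂
  set T : X → (V →L[𝕂] F) := fun m => a₁ + (𝔠 m).comp j with hT
  have hTw : ∀ (m : X) (v : V) (w : W), T m v w = a₁ v w + 𝔠 m (j v) w := by
    intro m v w
    rfl
  have hwp' : ∀ m ∈ 𝒢, ∀ φ : F, ∃! u : V, T m u = φ := by
    intro m hm φ
    obtain ⟨u, hu, huniq⟩ := hwp m hm φ
    refine ⟨u, ?_, fun v hv => huniq v ?_⟩
    · ext w; rw [hTw]; exact hu w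
    · intro w; rw [← hTw, hv]
  have hbij : ∀ m ∈ 𝒢, Function.Bijective (T m) := by
    intro m hm
    constructor
    · intro u u' h
      obtain ⟨u₀, _, huniq⟩ := hwp' m hm (T m u')
      exact (huniq u (by ext w; exact congrFun (congrArg _ h) w)).trans (huniq u' rfl).symm
    · intro φ
      obtain ⟨u, hu, _⟩ := hwp' m hm φ
      exact ⟨u, hu⟩
  -- the continuous linear equivalence induced by `T m`
  have hex : ∀ m ∈ 𝒢, ∃ e : V ≃L[𝕂] F, (e : V →L[𝕂] F) = T m := by
    intro m hm
    refine ⟨ContinuousLinearEquiv.ofBijective (T m)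
      (LinearMap.ker_eq_bot.mpr (hbij m hm).1)
      (LinearMap.range_eq_top.mpr (hbij m hm).2), rfl⟩
  have hSformula : ∀ m ∈ 𝒢, S m = (ContinuousLinearMap.inverse (T m)) (Φ m) := by
    intro m hm
    obtain ⟨e, he⟩ := hex m hm
    have hTS : T m (S m) = Φ m := by
      ext w; rw [hTw]; exact hS m hm w
    rw [← he, ContinuousLinearMap.inverse_equiv]
    have h4 : e (S m) = Φ m := by rw [← hTS, ← he]; rfl
    rw [← h4]
    simp
  have hTdiff : ContDiffOn 𝕂 n T 𝒢 := by
    have h1 : ContDiff 𝕂 n (fun B : H →L[𝕂] (W →SL[starRingEnd 𝕂] 𝕂) => B.comp j) :=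
      contDiff_id.clm_comp contDiff_const
    exact contDiffOn_const.add (h1.comp_contDiffOn h𝔠)
  have key : ContDiffOn 𝕂 n (fun m => (ContinuousLinearMap.inverse (T m)) (Φ m)) 𝒢 := by
    intro m hm
    apply ContDiffAt.contDiffWithinAt
    have h1 : ContDiffAt 𝕂 n T m := hTdiff.contDiffAt (h𝒢open.mem_nhds hm)
    obtain ⟨e, he⟩ := hex m hm
    have h2 : ContDiffAt 𝕂 n (fun m => ContinuousLinearMap.inverse (T m)) m := by
      have := contDiffAt_map_inverse (𝕜 := 𝕂) (n := n) e
      rw [he] at this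
      exact this.comp m h1
    exact h2.clm_apply (hΦ.contDiffAt (h𝒢open.mem_nhds hm))
  exact key.congr hSformula
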